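/- Let G be a finite group, T a positive integer, 0 < δ ≤ 1/|G|, and γ > 0. Let s(t), t = 0,1,2,..., be arbitrary vectors of convex weights on G and let p(t+1) = s(t) ∗ p(t) from an arbitrary initial vector of convex weights p(t₀) at some time t₀. Suppose there exists an integer N with √|G|·(1 − |G|δ)^N < γ such that for every i = 0,1,...,N−1 the composite weights q(t₀+iT, T) = s(t₀+iT+T−1) ∗ ⋯ ∗ s(t₀+iT) satisfy q(t₀+iT,T)(g) ≥ δ for all g ∈ G. Then ‖p(t) − p̂‖ < γ for all t ≥ t₀ + N·T, regardless of the (arbitrary) convex weight vectors s(t) applied after time t₀ + N·T, where p̂(g) = 1/|G| and ‖·‖ is the Euclidean norm. -/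

import Mathlib

def IsConvexWeights {G : Type*} [Fintype G] (s : G → ℝ) : Prop :=
  (∀ g, 0 ≤ s g) ∧ ∑ g, s g = 1

def groupConv {G : Type*} [Group G] [Fintype G] (s p : G → ℝ) : G → ℝ :=
  fun g => ∑ h : G, s h * p (h⁻¹ * g)

def compWeights {G : Type*} [Group G] [Fintype G] [DecidableEq G]
    (s : ℕ → G → ℝ) (t : ℕ) : ℕ → G → ℝ
  | 0 => fun g => if g = 1 then 1 else 0
  | T + 1 => groupConv (s (t + T)) (compWeights s t T)

section Aux
variable {G : Type*} [Group G] [Fintype G]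

/-- reindexing: summing over h⁻¹ * g -/
lemma sum_translate' (f : G → ℝ) (g : G) : ∑ h : G, f (h⁻¹ * g) = ∑ h : G, f h := by
  apply Fintype.sum_equiv ((Equiv.inv G).trans (Equiv.mulRight g))
  intro h; rfl

lemma sum_translate_left (f : G → ℝ) (g : G) : ∑ h : G, f (g * h) = ∑ h : G, f h := by
  apply Fintype.sum_equiv (Equiv.mulLeft g)
  intro h; rfl

lemma groupConv_convex {s p : G → ℝ} (hs : IsConvexWeights s) (hp : IsConvexWeights p) :
    IsConvexWeights (groupConv s p) := by
  constructor
  · intro g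
    exact Finset.sum_nonneg fun h _ => mul_nonneg (hs.1 h) (hp.1 _)
  · unfold groupConv
    rw [Finset.sum_comm]
    simp only [← Finset.mul_sum, sum_translate_left, hp.2, mul_one, hs.2]

lemma groupConv_assoc (a b c : G → ℝ) :
    groupConv (groupConv a b) c = groupConv a (groupConv b c) := by
  funext g
  simp only [groupConv, Finset.sum_mul, Finset.mul_sum]
  rw [Finset.sum_comm]
  apply Finset.sum_congr rfl
  intro h _
  apply Fintype.sum_equiv (Equiv.mulLeft h⁻¹)
  intro k
  simp [mul_assoc, mul_inv_rev, inv_inv, mul_inv_cancel_left]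

variable [DecidableEq G]

lemma groupConv_delta (p : G → ℝ) :
    groupConv (fun g => if g = (1:G) then (1:ℝ) else 0) p = p := by
  funext g
  simp [groupConv]

lemma compWeights_convex (s : ℕ → G → ℝ) (hs : ∀ t, IsConvexWeights (s t)) (t : ℕ) :
    ∀ T, IsConvexWeights (compWeights s t T)
  | 0 => by
    constructor
    · intro g; dsimp [compWeights]; split <;> norm_num
    · simp [compWeights]
  | T + 1 => groupConv_convex (hs _) (compWeights_convex s hs t T)

lemma evolution (s : ℕ → G → ℝ) (t₀ : ℕ) (p : ℕ → G → ℝ)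
    (hstep : ∀ t, t₀ ≤ t → p (t + 1) = groupConv (s t) (p t))
    (t : ℕ) (ht : t₀ ≤ t) :
    ∀ k : ℕ, p (t + k) = groupConv (compWeights s t k) (p t)
  | 0 => by simp [compWeights, groupConv_delta]
  | k + 1 => by
    rw [show t + (k+1) = (t+k) + 1 from rfl, hstep (t+k) (le_trans ht (Nat.le_add_right t k)),
      evolution s t₀ p hstep t ht k, ← groupConv_assoc]
    rfl


noncomputable def dev (p : G → ℝ) : EuclideanSpace ℝ G :=
  WithLp.toLp 2 (fun g => p g - 1 / (Fintype.card G : ℝ))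

lemma dev_norm (p : G → ℝ) :
    ‖dev p‖ = Real.sqrt (∑ g, (p g - 1 / (Fintype.card G : ℝ)) ^ 2) := by
  rw [EuclideanSpace.norm_eq]
  congr 1
  exact Finset.sum_congr rfl fun g _ => by rw [Real.norm_eq_abs, sq_abs]; rfl

lemma norm_dev_conv_le (q p : G → ℝ) (δ : ℝ)
    (hq0 : ∀ g, δ ≤ q g) (hq1 : ∑ g, q g = 1)
    (hp : IsConvexWeights p) :
    ‖dev (groupConv q p)‖ ≤ (1 - (Fintype.card G : ℝ) * δ) * ‖dev p‖ := by
  have hn : (Fintype.card G : ℝ) ≠ 0 := by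
    exact_mod_cast Fintype.card_ne_zero
  set τ : G → EuclideanSpace ℝ G := fun h => WithLp.toLp 2 (fun g => dev p (h⁻¹ * g)) with hτ
  have key : dev (groupConv q p) = ∑ h : G, (q h - δ) • τ h := by
    ext g
    have sum_app : (∑ h : G, (q h - δ) • τ h) g = ∑ h : G, (q h - δ) * dev p (h⁻¹ * g) :=
      by rw [WithLp.ofLp_sum, Finset.sum_apply]; rfl
    rw [sum_app]
    simp only [dev, groupConv]
    have htrans : ∑ h : G, p (h⁻¹ * g) = 1 := by rw [sum_translate']; exact hp.2
    have e1 : ∀ h : G, (q h - δ) * (p (h⁻¹ * g) - 1 / (Fintype.card G : ℝ))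
        = q h * p (h⁻¹ * g) - ((1 / (Fintype.card G : ℝ)) * q h + δ * p (h⁻¹ * g))
          + δ * (1 / (Fintype.card G : ℝ)) := fun h => by ring
    rw [Finset.sum_congr rfl fun h _ => e1 h, Finset.sum_add_distrib,
      Finset.sum_sub_distrib, Finset.sum_add_distrib, ← Finset.mul_sum, ← Finset.mul_sum,
      hq1, htrans, Finset.sum_const, nsmul_eq_mul, Finset.card_univ]
    field_simp
    ring
  have htrnorm : ∀ h : G, ‖τ h‖ = ‖dev p‖ := by
    intro h
    rw [EuclideanSpace.norm_eq (τ h), EuclideanSpace.norm_eq (dev p)]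
    congr 1
    exact sum_translate_left (fun g => ‖dev p g‖ ^ 2) h⁻¹
  calc ‖dev (groupConv q p)‖
      = ‖∑ h : G, (q h - δ) • τ h‖ := by rw [key]
    _ ≤ ∑ h : G, ‖(q h - δ) • τ h‖ := norm_sum_le _ _
    _ = ∑ h : G, (q h - δ) * ‖dev p‖ := by
        refine Finset.sum_congr rfl fun h _ => ?_
        rw [norm_smul, Real.norm_eq_abs, abs_of_nonneg (sub_nonneg.2 (hq0 h)), htrnorm]
    _ = (1 - (Fintype.card G : ℝ) * δ) * ‖dev p‖ := by
        rw [← Finset.sum_mul, Finset.sum_sub_distrib, hq1, Finset.sum_const, nsmul_eq_mul,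
          Finset.card_univ]

end Aux

theorem once_close_always_close
    {G : Type*} [Group G] [Fintype G] [DecidableEq G]
    (T : ℕ) (hT : 0 < T)
    (δ : ℝ) (hδ0 : 0 < δ) (hδ1 : δ ≤ 1 / (Fintype.card G : ℝ))
    (γ : ℝ) (hγ : 0 < γ)
    (s : ℕ → G → ℝ) (hs : ∀ t, IsConvexWeights (s t))
    (t₀ : ℕ) (p : ℕ → G → ℝ) (hp0 : IsConvexWeights (p t₀))
    (hstep : ∀ t, t₀ ≤ t → p (t + 1) = groupConv (s t) (p t))
    (N : ℕ)
    (hN : Real.sqrt (Fintype.card G) * (1 - (Fintype.card G : ℝ) * δ) ^ N < γ)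
    (hq : ∀ i < N, ∀ g : G, δ ≤ compWeights s (t₀ + i * T) T g) :
    ∀ t : ℕ, t₀ + N * T ≤ t →
      Real.sqrt (∑ g : G, (p t g - 1 / (Fintype.card G : ℝ)) ^ 2) < γ := by
  have hcard : 0 < (Fintype.card G : ℝ) := by exact_mod_cast Fintype.card_pos
  have hfac : 0 ≤ 1 - (Fintype.card G : ℝ) * δ := by
    have h2 := (le_div_iff₀ hcard).1 hδ1
    nlinarith
  -- convexity at all times ≥ t₀
  have hconv : ∀ k : ℕ, IsConvexWeights (p (t₀ + k)) := by
    intro k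
    induction k with
    | zero => simpa using hp0
    | succ k ih =>
      rw [show t₀ + (k+1) = (t₀ + k) + 1 from rfl, hstep _ (Nat.le_add_right _ _)]
      exact groupConv_convex (hs _) ih
  have hconv' : ∀ t : ℕ, t₀ ≤ t → IsConvexWeights (p t) := by
    intro t ht
    obtain ⟨k, rfl⟩ := Nat.exists_eq_add_of_le ht
    exact hconv k
  -- block contraction
  have hblock : ∀ i ≤ N, ‖dev (p (t₀ + i * T))‖
      ≤ (1 - (Fintype.card G : ℝ) * δ) ^ i * ‖dev (p t₀)‖ := by
    intro i hi
    induction i with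
    | zero => simp
    | succ i ih =>
      have hi' : i ≤ N := Nat.le_of_succ_le hi
      have hev : p (t₀ + (i+1) * T) = groupConv (compWeights s (t₀ + i * T) T) (p (t₀ + i * T)) := by
        rw [show t₀ + (i+1) * T = (t₀ + i * T) + T by ring]
        exact evolution s t₀ p hstep _ (Nat.le_add_right _ _) T
      rw [hev]
      calc ‖dev (groupConv (compWeights s (t₀ + i * T) T) (p (t₀ + i * T)))‖
          ≤ (1 - (Fintype.card G : ℝ) * δ) * ‖dev (p (t₀ + i * T))‖ :=
            norm_dev_conv_le _ _ δ (hq i hi) (compWeights_convex s hs _ T).2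
              (hconv' _ (Nat.le_add_right _ _))
        _ ≤ (1 - (Fintype.card G : ℝ) * δ) * ((1 - (Fintype.card G : ℝ) * δ) ^ i * ‖dev (p t₀)‖) :=
            mul_le_mul_of_nonneg_left (ih hi') hfac
        _ = (1 - (Fintype.card G : ℝ) * δ) ^ (i+1) * ‖dev (p t₀)‖ := by ring
  -- nonexpansive afterwards
  have hafter : ∀ k : ℕ, ‖dev (p (t₀ + N * T + k))‖ ≤ ‖dev (p (t₀ + N * T))‖ := by
    intro k
    induction k with
    | zero => exact le_refl _
    | succ k ih =>
      have ht : t₀ ≤ t₀ + N * T + k := by omega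
      rw [show t₀ + N * T + (k+1) = (t₀ + N * T + k) + 1 from rfl, hstep _ ht]
      calc ‖dev (groupConv (s (t₀ + N * T + k)) (p (t₀ + N * T + k)))‖
          ≤ (1 - (Fintype.card G : ℝ) * 0) * ‖dev (p (t₀ + N * T + k))‖ :=
            norm_dev_conv_le _ _ 0 (fun g => (hs _).1 g) (hs _).2 (hconv' _ ht)
        _ = ‖dev (p (t₀ + N * T + k))‖ := by ring
        _ ≤ ‖dev (p (t₀ + N * T))‖ := ih
  -- initial bound
  have hinit : ‖dev (p t₀)‖ ≤ Real.sqrt (Fintype.card G) := by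
    rw [dev_norm]
    apply Real.sqrt_le_sqrt
    calc ∑ g : G, (p t₀ g - 1 / (Fintype.card G : ℝ)) ^ 2
        ≤ ∑ _g : G, (1:ℝ) := by
          apply Finset.sum_le_sum
          intro g _
          have h1 : p t₀ g ≤ 1 := by
            rw [← hp0.2]
            exact Finset.single_le_sum (fun h _ => hp0.1 h) (Finset.mem_univ g)
          have h2 : (0:ℝ) ≤ 1 / (Fintype.card G : ℝ) := by positivity
          have h3 : 1 / (Fintype.card G : ℝ) ≤ 1 := by
            rw [div_le_one hcard]
            exact_mod_cast Fintype.card_pos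
          nlinarith [hp0.1 g]
      _ = (Fintype.card G : ℝ) := by simp
  intro t ht
  obtain ⟨k, rfl⟩ := Nat.exists_eq_add_of_le ht
  have := hafter k
  have hb := hblock N le_rfl
  rw [← dev_norm]
  calc ‖dev (p (t₀ + N * T + k))‖
      ≤ ‖dev (p (t₀ + N * T))‖ := hafter k
    _ ≤ (1 - (Fintype.card G : ℝ) * δ) ^ N * ‖dev (p t₀)‖ := hb
    _ ≤ (1 - (Fintype.card G : ℝ) * δ) ^ N * Real.sqrt (Fintype.card G) :=
        mul_le_mul_of_nonneg_left hinit (pow_nonneg hfac N)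
    _ = Real.sqrt (Fintype.card G) * (1 - (Fintype.card G : ℝ) * δ) ^ N := by ring
    _ < γ := hN
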